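/- Let m ≥ 1, let b_1, ..., b_m > 0 be distinct and a_1, ..., a_m ∈ ℝ all nonzero. Then limsup_{z → ∞} |∑_{k=1}^m a_k e^{i b_k z}| > 0. -/

import Mathlib

open Filter Complex

private lemma exp_diff_ne_zero {c h : ℝ} (hc : c ≠ 0) (hh : 0 < h)
    (hsmall : |c| * h < 2 * Real.pi) :
    Complex.exp (Complex.I * c * h) ≠ 1 := by
  intro heq
  rw [Complex.exp_eq_one_iff] at heq
  obtain ⟨n, hn⟩ := heq
  have : (Complex.I * c * h) = (n : ℂ) * (2 * Real.pi * Complex.I) := hn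
  have h2 : ((c * h : ℝ) : ℂ) * Complex.I = ((n : ℝ) * (2 * Real.pi) : ℝ) * Complex.I := by
    push_cast
    push_cast at this
    linear_combination this
  have h3 : (c * h : ℝ) = (n : ℝ) * (2 * Real.pi) := by
    have := mul_right_cancel₀ Complex.I_ne_zero h2
    exact_mod_cast this
  have hne : c * h ≠ 0 := mul_ne_zero hc (ne_of_gt hh)
  have hn0 : n ≠ 0 := by
    rintro rfl; simp at h3
    rcases h3 with h | h
    exacts [hc h, (ne_of_gt hh) h]
  have h1le : (1 : ℝ) ≤ |(n : ℝ)| := by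
    exact_mod_cast Int.one_le_abs hn0
  have : 2 * Real.pi ≤ |(n : ℝ)| * (2 * Real.pi) := by
    nlinarith [Real.pi_pos]
  have habs : |c * h| = |(n : ℝ)| * (2 * Real.pi) := by
    rw [h3, abs_mul, abs_of_pos (by positivity : (0:ℝ) < 2 * Real.pi)]
  have : |c| * h < |c * h| := by
    rw [habs]; calc |c| * h < 2 * Real.pi := hsmall
      _ ≤ |(n : ℝ)| * (2 * Real.pi) := this
  rw [abs_mul, abs_of_pos hh] at this
  exact lt_irrefl _ this

private lemma trig_sum_tendsto_zero {ι : Type*} [DecidableEq ι] (t : Finset ι) (b : ι → ℝ) :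
    ∀ (a : ι → ℂ), Set.InjOn b t →
    Tendsto (fun z : ℝ => ∑ k ∈ t, a k * Complex.exp (Complex.I * b k * z))
      atTop (nhds 0) → ∀ k ∈ t, a k = 0 := by
  induction t using Finset.induction_on with
  | empty => intro a _ _ k hk; exact absurd hk (Finset.notMem_empty k)
  | @insert k0 t hk0 IH =>
    intro a hinj htend
    -- choose h
    set M : ℝ := 1 + ∑ k ∈ t, |b k - b k0| with hM
    have hMpos : 0 < M := by
      have : (0:ℝ) ≤ ∑ k ∈ t, |b k - b k0| := Finset.sum_nonneg fun k _ => abs_nonneg _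
      linarith
    set h : ℝ := Real.pi / M with hh
    have hhpos : 0 < h := div_pos Real.pi_pos hMpos
    have hbound : ∀ k ∈ t, |b k - b k0| * h < 2 * Real.pi := by
      intro k hk
      have h1 : |b k - b k0| ≤ M - 1 := by
        have := Finset.single_le_sum (f := fun k => |b k - b k0|)
          (fun k _ => abs_nonneg _) hk
        simp only [hM]; linarith
      have h2 : |b k - b k0| * h ≤ (M - 1) * h := by
        apply mul_le_mul_of_nonneg_right h1 (le_of_lt hhpos)
      have h3 : (M - 1) * h < M * h := by nlinarith
      have h4 : M * h = Real.pi := by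
        rw [hh]; field_simp [hMpos.ne']
      nlinarith [Real.pi_pos]
    -- the differenced function
    have key : ∀ z : ℝ,
        (∑ k ∈ insert k0 t, a k * Complex.exp (Complex.I * b k * ((z + h : ℝ) : ℂ)))
        - Complex.exp (Complex.I * b k0 * h) *
          (∑ k ∈ insert k0 t, a k * Complex.exp (Complex.I * b k * z))
        = ∑ k ∈ t, (a k * (Complex.exp (Complex.I * b k * h)
            - Complex.exp (Complex.I * b k0 * h))) * Complex.exp (Complex.I * b k * z) := by
      intro z
      have e0 : a k0 * Complex.exp (Complex.I * b k0 * ((z + h : ℝ) : ℂ))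
          - Complex.exp (Complex.I * b k0 * h) * (a k0 * Complex.exp (Complex.I * b k0 * z)) = 0 := by
        push_cast
        rw [show Complex.I * (b k0 : ℂ) * ((z : ℂ) + (h : ℂ))
            = Complex.I * b k0 * z + Complex.I * b k0 * h by ring, Complex.exp_add]
        ring
      have e1 : ∀ k ∈ t, a k * Complex.exp (Complex.I * b k * ((z + h : ℝ) : ℂ))
          - Complex.exp (Complex.I * b k0 * h) * (a k * Complex.exp (Complex.I * b k * z))
          = (a k * (Complex.exp (Complex.I * b k * h)
            - Complex.exp (Complex.I * b k0 * h))) * Complex.exp (Complex.I * b k * z) := by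
        intro k _
        push_cast
        rw [show Complex.I * (b k : ℂ) * ((z : ℂ) + (h : ℂ))
            = Complex.I * b k * z + Complex.I * b k * h by ring, Complex.exp_add]
        ring
      rw [Finset.sum_insert hk0, Finset.sum_insert hk0, mul_add, Finset.mul_sum,
        ← Finset.sum_congr rfl e1, Finset.sum_sub_distrib]
      linear_combination e0
    -- tendsto of differenced function
    have htend2 : Tendsto (fun z : ℝ => ∑ k ∈ t,
        (a k * (Complex.exp (Complex.I * b k * h) - Complex.exp (Complex.I * b k0 * h)))
          * Complex.exp (Complex.I * b k * z)) atTop (nhds 0) := by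
      have h1 : Tendsto (fun z : ℝ =>
          ∑ k ∈ insert k0 t, a k * Complex.exp (Complex.I * b k * ((z + h : ℝ) : ℂ)))
          atTop (nhds 0) :=
        htend.comp (tendsto_atTop_add_const_right atTop h tendsto_id)
      have h2 := h1.sub ((htend.const_mul (Complex.exp (Complex.I * b k0 * h))))
      simp only [mul_zero, sub_zero] at h2
      exact h2.congr fun z => key z
    have hinj' : Set.InjOn b t := hinj.mono (by simp [Finset.coe_insert, Set.subset_insert])
    have hzero := IH _ hinj' htend2
    have hcoef : ∀ k ∈ t, a k = 0 := by
      intro k hk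
      have hne : Complex.exp (Complex.I * b k * h) - Complex.exp (Complex.I * b k0 * h) ≠ 0 := by
        intro heq
        have heq' : Complex.exp (Complex.I * (b k - b k0) * h) = 1 := by
          have hmul : Complex.exp (Complex.I * (b k - b k0) * h)
              * Complex.exp (Complex.I * b k0 * h) = Complex.exp (Complex.I * b k * h) := by
            rw [← Complex.exp_add]; push_cast; ring_nf
          have hk0ne := Complex.exp_ne_zero (Complex.I * b k0 * h)
          have : Complex.exp (Complex.I * b k * h) = Complex.exp (Complex.I * b k0 * h) := by
            linear_combination heq
          rw [this] at hmul
          exact mul_right_cancel₀ hk0ne (hmul.trans (one_mul _).symm)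
        have hbne : b k - b k0 ≠ 0 := by
          have : b k ≠ b k0 := fun hc =>
            hk0 (by rwa [hinj (by simp [hk]) (by simp) hc] at hk)
          exact sub_ne_zero.mpr this
        have := exp_diff_ne_zero hbne hhpos (hbound k hk)
        rw [show ((b k - b k0 : ℝ) : ℂ) = (b k : ℂ) - b k0 by push_cast; ring] at this
        exact this heq'
      have := hzero k hk
      exact (mul_eq_zero.mp this).resolve_right hne
    have hak0 : a k0 = 0 := by
      have hsimp : ∀ z : ℝ, (∑ k ∈ insert k0 t, a k * Complex.exp (Complex.I * b k * z))
          = a k0 * Complex.exp (Complex.I * b k0 * z) := by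
        intro z
        rw [Finset.sum_insert hk0]
        have : ∑ k ∈ t, a k * Complex.exp (Complex.I * b k * z) = 0 :=
          Finset.sum_eq_zero fun k hk => by rw [hcoef k hk, zero_mul]
        rw [this, add_zero]
      have htend3 : Tendsto (fun z : ℝ => ‖a k0 * Complex.exp (Complex.I * b k0 * z)‖)
          atTop (nhds 0) := by
        have := htend.congr hsimp
        exact (tendsto_zero_iff_norm_tendsto_zero.mp this)
      have hconst : ∀ z : ℝ, ‖a k0 * Complex.exp (Complex.I * b k0 * z)‖ = ‖a k0‖ := by
        intro z
        rw [norm_mul, Complex.norm_exp]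
        have : (Complex.I * b k0 * z).re = 0 := by simp
        rw [this, Real.exp_zero, mul_one]
      have : Tendsto (fun _ : ℝ => ‖a k0‖) atTop (nhds 0) := htend3.congr hconst
      have h0 : ‖a k0‖ = 0 := tendsto_nhds_unique tendsto_const_nhds this
      exact norm_eq_zero.mp h0
    intro k hk
    rcases Finset.mem_insert.mp hk with h | hkt
    · rw [h]; exact hak0
    · exact hcoef k hkt

/-- A nontrivial trigonometric sum with distinct positive frequencies does not
tend to zero: its limsup at infinity is positive. -/
theorem stmt_6 (m : ℕ) (hm : 1 ≤ m) (b a : Fin m → ℝ)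
    (hb : ∀ k, 0 < b k) (hbd : Function.Injective b) (ha : ∀ k, a k ≠ 0) :
    0 < Filter.limsup
      (fun z : ℝ => ‖∑ k, (a k : ℂ) * Complex.exp (Complex.I * (b k) * z)‖)
      Filter.atTop := by
  by_contra hcon
  push_neg at hcon
  set F : ℝ → ℝ := fun z => ‖∑ k, (a k : ℂ) * Complex.exp (Complex.I * (b k) * z)‖ with hF
  have hbdd_above : IsBoundedUnder (· ≤ ·) atTop F :=
    isBoundedUnder_of ⟨∑ k, ‖(a k : ℂ)‖, fun z => by
      calc F z ≤ ∑ k, ‖(a k : ℂ) * Complex.exp (Complex.I * (b k) * z)‖ :=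
            norm_sum_le _ _
        _ ≤ ∑ k, ‖(a k : ℂ)‖ := by
            apply Finset.sum_le_sum
            intro k _
            rw [norm_mul]
            have : ‖Complex.exp (Complex.I * (b k) * z)‖ = 1 := by
              rw [Complex.norm_exp]
              have : (Complex.I * (b k) * z).re = 0 := by simp
              rw [this, Real.exp_zero]
            rw [this, mul_one]⟩
  have hbdd_below : IsBoundedUnder (· ≥ ·) atTop F :=
    isBoundedUnder_of ⟨0, fun z => norm_nonneg _⟩
  have hliminf : (0 : ℝ) ≤ liminf F atTop :=
    le_liminf_of_le hbdd_above.isCoboundedUnder_ge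
      (Eventually.of_forall fun z => norm_nonneg _)
  have htendF : Tendsto F atTop (nhds 0) :=
    tendsto_of_le_liminf_of_limsup_le hliminf hcon hbdd_above hbdd_below
  have htend : Tendsto (fun z : ℝ => ∑ k, (a k : ℂ) * Complex.exp (Complex.I * (b k) * z))
      atTop (nhds 0) := tendsto_zero_iff_norm_tendsto_zero.mpr htendF
  have := trig_sum_tendsto_zero (Finset.univ : Finset (Fin m)) b
    (fun k => (a k : ℂ)) (hbd.injOn) htend
  have hk0 : (⟨0, hm⟩ : Fin m) ∈ (Finset.univ : Finset (Fin m)) := Finset.mem_univ _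
  have h0 := this _ hk0
  have h0' : ((a ⟨0, hm⟩ : ℝ) : ℂ) = 0 := h0
  exact ha ⟨0, hm⟩ (by exact_mod_cast h0')
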